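/- Let 0 < p ≤ 1/2 and let F, G ⊆ P([n]) be cross-intersecting families. Then μ_p(F) ≤ (1 − μ_p(G))^{log_{1−p} p}. -/

import Mathlib

open Finset

noncomputable def biasedMeasure (p : ℝ) (n : ℕ) (F : Finset (Finset (Fin n))) : ℝ :=
  ∑ A ∈ F, p ^ A.card * (1 - p) ^ (n - A.card)

lemma key_core {p : ℝ} (hp : 0 < p) (hp2 : p < 1/2) {v : ℝ} (hv0 : 0 ≤ v) (hv1 : v ≤ 1) :
    p + (1 - p) * v ^ (Real.log p / Real.log (1-p)) ≤
      ((1 - p) + p * v) ^ (Real.log p / Real.log (1-p)) := by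
  have h1p : (0:ℝ) < 1 - p := by linarith
  have hlogp : Real.log p < 0 := Real.log_neg hp (by linarith)
  have hlog1p : Real.log (1-p) < 0 := Real.log_neg h1p (by linarith)
  set c : ℝ := Real.log p / Real.log (1-p) with hc_def
  have hc : 1 < c := by
    rw [hc_def, lt_div_iff_of_neg hlog1p]
    have := Real.log_lt_log hp (by linarith : p < 1 - p)
    linarith
  have hpc : (1-p) ^ c = p := by
    rw [Real.rpow_def_of_pos h1p, hc_def, mul_div_cancel₀ _ (ne_of_lt hlog1p), Real.exp_log hp]
  set r : ℝ := (p/(1-p)) ^ (1/(c-1)) with hr_def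
  have hpq : 0 < p / (1-p) := div_pos hp h1p
  have hpq1 : p / (1-p) < 1 := (div_lt_one h1p).2 (by linarith)
  have hr0 : 0 < r := Real.rpow_pos_of_pos hpq _
  have hr1 : r < 1 := Real.rpow_lt_one hpq.le hpq1 (one_div_pos.2 (by linarith))
  have hrc : r ^ (c-1) = p / (1-p) := by
    rw [hr_def, ← Real.rpow_mul hpq.le, one_div, inv_mul_cancel₀ (by linarith : c - 1 ≠ 0),
      Real.rpow_one]
  have h1rp : 0 < 1 - r * p := by nlinarith
  set vs : ℝ := r * (1-p) / (1 - r * p) with hvs_def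
  have hvs0 : 0 < vs := by positivity
  have hvs1 : vs ≤ 1 := by rw [hvs_def, div_le_one h1rp]; nlinarith
  set φ : ℝ → ℝ := fun v => ((1-p) + p*v)^c - (1-p) * v^c - p with hφ_def
  have hbase : ∀ v : ℝ, 0 ≤ v → 0 < (1-p) + p * v := by intro v hv; nlinarith
  have hderiv : ∀ v : ℝ, HasDerivAt φ
      (p * c * ((1-p)+p*v)^(c-1) - (1-p) * (c * v^(c-1))) v := by
    intro v
    have h1 : HasDerivAt (fun v : ℝ => (1-p) + p*v) p v := by
      simpa using ((hasDerivAt_id v).const_mul p).const_add (1-p)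
    have h2 := h1.rpow_const (Or.inr hc.le)
    have h3 := ((hasDerivAt_id v).rpow_const (Or.inr hc.le)).const_mul (1-p)
    have h4 := (h2.sub h3).sub_const p
    simp only [id_eq] at h4
    refine h4.congr_deriv ?_
    ring
  have hdiff : Differentiable ℝ φ := fun v => (hderiv v).differentiableAt
  have hφ0 : φ 0 = 0 := by
    simp [hφ_def, Real.zero_rpow (by linarith : c ≠ 0), hpc]
  have hφ1 : φ 1 = 0 := by
    simp [hφ_def, Real.one_rpow]
  have hφv : 0 ≤ φ v := by
    rcases le_total v vs with hv | hv
    · have hmono : MonotoneOn φ (Set.Icc 0 vs) := by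
        apply monotoneOn_of_deriv_nonneg (convex_Icc 0 vs) hdiff.continuous.continuousOn
          (hdiff.differentiableOn)
        intro y hy
        rw [interior_Icc] at hy
        rw [(hderiv y).deriv]
        have hy0 : 0 < y := hy.1
        have hyvs : y ≤ vs := hy.2.le
        have hkey : y ≤ r * ((1-p) + p * y) := by
          have h5 : y * (1 - r*p) ≤ r * (1-p) := by
            rw [hvs_def, le_div_iff₀ h1rp] at hyvs; linarith
          nlinarith
        have h2 : y ^ (c-1) ≤ (r * ((1-p)+p*y)) ^ (c-1) :=
          Real.rpow_le_rpow hy0.le hkey (by linarith)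
        rw [Real.mul_rpow hr0.le (hbase y hy0.le).le, hrc] at h2
        rw [div_mul_eq_mul_div, le_div_iff₀ h1p] at h2
        have h5 := mul_le_mul_of_nonneg_left h2 (by linarith : (0:ℝ) ≤ c)
        nlinarith [h5]
      have := hmono (Set.mem_Icc.2 ⟨le_refl 0, hvs0.le⟩) (Set.mem_Icc.2 ⟨hv0, hv⟩) hv0
      linarith
    · have hanti : AntitoneOn φ (Set.Icc vs 1) := by
        apply antitoneOn_of_deriv_nonpos (convex_Icc vs 1) hdiff.continuous.continuousOn
          (hdiff.differentiableOn)
        intro y hy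
        rw [interior_Icc] at hy
        rw [(hderiv y).deriv]
        have hy0 : 0 < y := lt_trans hvs0 hy.1
        have hyvs : vs ≤ y := hy.1.le
        have hkey : r * ((1-p) + p * y) ≤ y := by
          have h5 : r * (1-p) ≤ y * (1 - r*p) := by
            rw [hvs_def, div_le_iff₀ h1rp] at hyvs; linarith
          nlinarith
        have h2 : (r * ((1-p)+p*y)) ^ (c-1) ≤ y ^ (c-1) :=
          Real.rpow_le_rpow (by positivity) hkey (by linarith)
        rw [Real.mul_rpow hr0.le (hbase y hy0.le).le, hrc] at h2
        rw [div_mul_eq_mul_div, div_le_iff₀ h1p] at h2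
        have h5 := mul_le_mul_of_nonneg_left h2 (by linarith : (0:ℝ) ≤ c)
        nlinarith [h5]
      have := hanti (Set.mem_Icc.2 ⟨hv, hv1⟩) (Set.mem_Icc.2 ⟨hvs1, le_refl 1⟩) hv1
      linarith
  simp only [hφ_def] at hφv
  linarith


lemma key_ineq {p : ℝ} (hp : 0 < p) (hp2 : p ≤ 1/2) {u v : ℝ} (hv0 : 0 ≤ v) (hvu : v ≤ u)
    (hu1 : u ≤ 1) :
    p * u ^ (Real.log p / Real.log (1-p)) + (1 - p) * v ^ (Real.log p / Real.log (1-p)) ≤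
      ((1 - p) * u + p * v) ^ (Real.log p / Real.log (1-p)) := by
  have h1p : (0:ℝ) < 1 - p := by linarith
  have hlogp : Real.log p < 0 := Real.log_neg hp (by linarith)
  have hlog1p : Real.log (1-p) < 0 := Real.log_neg h1p (by linarith)
  set c : ℝ := Real.log p / Real.log (1-p) with hc_def
  have hc0 : 0 < c := div_pos_of_neg_of_neg hlogp hlog1p
  rcases eq_or_lt_of_le hp2 with hhalf | hlt
  · have hc1 : c = 1 := by
      rw [hc_def, hhalf]; norm_num
    rw [hc1]
    simp only [Real.rpow_one]
    rw [hhalf]; linarith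
  · have hu0 : 0 ≤ u := le_trans hv0 hvu
    rcases eq_or_lt_of_le hu0 with hu0' | hu0'
    · have hv : v = 0 := le_antisymm (by linarith) hv0
      rw [← hu0', hv]
      simp [Real.zero_rpow (ne_of_gt hc0)]
    · have ht0 : 0 ≤ v / u := div_nonneg hv0 hu0
      have ht1 : v / u ≤ 1 := (div_le_one hu0').2 hvu
      have h := key_core hp hlt ht0 ht1
      have hmul := mul_le_mul_of_nonneg_right h (le_of_lt (Real.rpow_pos_of_pos hu0' c))
      calc p * u ^ c + (1 - p) * v ^ c
          = (p + (1 - p) * (v/u) ^ c) * u ^ c := by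
            rw [Real.div_rpow hv0 hu0]
            field_simp
        _ ≤ ((1 - p) + p * (v/u)) ^ c * u ^ c := hmul
        _ = ((1 - p) * u + p * v) ^ c := by
            rw [← Real.mul_rpow (by positivity) hu0]
            congr 1
            field_simp


noncomputable def bm {α : Type} [Fintype α] (p : ℝ) (F : Finset (Finset α)) : ℝ :=
  ∑ A ∈ F, p ^ A.card * (1 - p) ^ (Fintype.card α - A.card)

lemma bm_nonneg {α : Type} [Fintype α] {p : ℝ} (hp : 0 ≤ p) (hp1 : p ≤ 1)
    (F : Finset (Finset α)) : 0 ≤ bm p F := by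
  apply Finset.sum_nonneg
  intro A _
  have : (0:ℝ) ≤ 1 - p := by linarith
  positivity

lemma bm_le_one {α : Type} [Fintype α] {p : ℝ} (hp : 0 ≤ p) (hp1 : p ≤ 1)
    (F : Finset (Finset α)) : bm p F ≤ 1 := by
  classical
  have h1p : (0:ℝ) ≤ 1 - p := by linarith
  have htotal : bm p ((Finset.univ : Finset α).powerset) = 1 := by
    unfold bm
    have := Finset.prod_add (fun _ : α => p) (fun _ : α => 1 - p) Finset.univ
    simp only [Finset.prod_const] at this
    have hrw : ∀ A ∈ (Finset.univ : Finset α).powerset,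
        p ^ A.card * (1-p) ^ (Fintype.card α - A.card)
          = p ^ A.card * (1-p) ^ (Finset.univ \ A).card := by
      intro A hA
      rw [Finset.card_sdiff_of_subset (Finset.subset_univ A), Finset.card_univ]
    rw [Finset.sum_congr rfl hrw]
    rw [← this]
    simp [Finset.card_univ]
  calc bm p F ≤ bm p ((Finset.univ : Finset α).powerset) := by
        apply Finset.sum_le_sum_of_subset_of_nonneg
        · intro A _; simp [Finset.mem_powerset]
        · intro A _ _; positivity
    _ = 1 := htotal

variable {α : Type} [Fintype α] [DecidableEq α]

noncomputable def res0 (x : α) (F : Finset (Finset α)) : Finset (Finset {y : α // y ≠ x}) :=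
  (F.filter fun A => x ∉ A).image fun A => A.subtype (· ≠ x)

noncomputable def res1 (x : α) (F : Finset (Finset α)) : Finset (Finset {y : α // y ≠ x}) :=
  (F.filter fun A => x ∈ A).image fun A => A.subtype (· ≠ x)

lemma card_ne (x : α) : Fintype.card {y : α // y ≠ x} = Fintype.card α - 1 := by
  simp [Fintype.card_subtype_compl, Fintype.card_subtype_eq]

lemma subtype_inj_of_mem {x : α} {A B : Finset α} (hA : x ∈ A → x ∈ B) (hB : x ∈ B → x ∈ A)
    (h : A.subtype (· ≠ x) = B.subtype (· ≠ x)) : A = B := by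
  have h2 : A.filter (· ≠ x) = B.filter (· ≠ x) := by
    rw [← Finset.subtype_map (p := (· ≠ x)), ← Finset.subtype_map (p := (· ≠ x)), h]
  rw [Finset.filter_ne', Finset.filter_ne'] at h2
  ext a
  by_cases ha : a = x
  · subst ha; constructor
    · exact hA
    · exact hB
  · constructor
    · intro haA
      have : a ∈ A.erase x := Finset.mem_erase.2 ⟨ha, haA⟩
      rw [h2] at this
      exact Finset.mem_of_mem_erase this
    · intro haB
      have : a ∈ B.erase x := Finset.mem_erase.2 ⟨ha, haB⟩
      rw [← h2] at this
      exact Finset.mem_of_mem_erase this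

lemma card_subtype_eq_card {x : α} {A : Finset α} (hx : x ∉ A) :
    (A.subtype (· ≠ x)).card = A.card := by
  rw [Finset.card_subtype, Finset.filter_ne', Finset.erase_eq_of_notMem hx]

lemma card_subtype_eq_card_sub {x : α} {A : Finset α} (hx : x ∈ A) :
    (A.subtype (· ≠ x)).card = A.card - 1 := by
  rw [Finset.card_subtype, Finset.filter_ne', Finset.card_erase_of_mem hx]

lemma bm_split (p : ℝ) (x : α) (F : Finset (Finset α)) :
    bm p F = (1 - p) * bm p (res0 x F) + p * bm p (res1 x F) := by
  classical
  have hcard := card_ne x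
  have hpos : 1 ≤ Fintype.card α := Fintype.card_pos_iff.2 ⟨x⟩
  unfold bm res0 res1
  rw [← Finset.sum_filter_add_sum_filter_not F (fun A => x ∈ A)]
  rw [Finset.mul_sum, Finset.mul_sum]
  rw [Finset.sum_image, Finset.sum_image]
  · rw [add_comm]
    congr 1
    · -- x ∉ A part
      apply Finset.sum_congr rfl
      intro A hA
      have hx : x ∉ A := by simpa using (Finset.mem_filter.1 hA).2
      rw [card_subtype_eq_card hx, hcard]
      have hAcard : A.card ≤ Fintype.card α - 1 := by
        have : A ⊆ Finset.univ.erase x := fun a ha => Finset.mem_erase.2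
          ⟨fun h => hx (h ▸ ha), Finset.mem_univ a⟩
        calc A.card ≤ (Finset.univ.erase x).card := Finset.card_le_card this
          _ = Fintype.card α - 1 := by rw [Finset.card_erase_of_mem (Finset.mem_univ x), Finset.card_univ]
      have : Fintype.card α - A.card = (Fintype.card α - 1 - A.card) + 1 := by omega
      rw [this, pow_succ]
      ring
    · -- x ∈ A part
      apply Finset.sum_congr rfl
      intro A hA
      have hx : x ∈ A := by simpa using (Finset.mem_filter.1 hA).2
      have hA1 : 1 ≤ A.card := Finset.card_pos.2 ⟨x, hx⟩
      have hAcard : A.card ≤ Fintype.card α := by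
        calc A.card ≤ Finset.univ.card := Finset.card_le_card (Finset.subset_univ A)
          _ = Fintype.card α := Finset.card_univ
      rw [card_subtype_eq_card_sub hx, hcard]
      have h1 : Fintype.card α - 1 - (A.card - 1) = Fintype.card α - A.card := by omega
      have h2 : A.card = (A.card - 1) + 1 := by omega
      rw [h1]
      have e : p ^ A.card = p * p ^ (A.card - 1) := by
        conv_lhs => rw [h2]
        rw [pow_succ]
        ring
      rw [e]
      ring
  · intro A hA B hB h
    have hxA : x ∈ A := by simpa using (Finset.mem_filter.1 hA).2
    have hxB : x ∈ B := by simpa using (Finset.mem_filter.1 hB).2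
    exact subtype_inj_of_mem (fun _ => hxB) (fun _ => hxA) h
  · intro A hA B hB h
    have hxA : x ∉ A := by simpa using (Finset.mem_filter.1 hA).2
    have hxB : x ∉ B := by simpa using (Finset.mem_filter.1 hB).2
    exact subtype_inj_of_mem (fun h => absurd h hxA) (fun h => absurd h hxB) h

lemma cross_sub {α : Type} [DecidableEq α] {x : α} {A B : Finset α} (hAB : (A ∩ B).Nonempty)
    (hx : x ∉ A ∨ x ∉ B) :
    ((A.subtype (· ≠ x)) ∩ (B.subtype (· ≠ x))).Nonempty := by
  obtain ⟨e, he⟩ := hAB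
  rw [Finset.mem_inter] at he
  have hex : e ≠ x := by
    rcases hx with h | h
    · exact fun hex => h (hex ▸ he.1)
    · exact fun hex => h (hex ▸ he.2)
  exact ⟨⟨e, hex⟩, Finset.mem_inter.2 ⟨Finset.mem_subtype.2 he.1, Finset.mem_subtype.2 he.2⟩⟩

lemma main_lemma : ∀ (n : ℕ) (α : Type) [Fintype α] [DecidableEq α], Fintype.card α = n →
    ∀ (p : ℝ), 0 < p → p ≤ 1/2 →
    ∀ F G : Finset (Finset α), (∀ A ∈ F, ∀ B ∈ G, (A ∩ B).Nonempty) →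
    bm p F ≤ (1 - bm p G) ^ (Real.log p / Real.log (1-p)) := by
  intro n
  induction n with
  | zero =>
    intro α _ _ hcard p hp hp2 F G hcross
    have hp1 : p ≤ 1 := by linarith
    have hbG1 := bm_le_one hp.le hp1 G
    rcases F.eq_empty_or_nonempty with hF | ⟨A, hA⟩
    · rw [hF]
      have : bm p (∅ : Finset (Finset α)) = 0 := by simp [bm]
      rw [this]
      exact Real.rpow_nonneg (by linarith [bm_nonneg hp.le hp1 G] : (0:ℝ) ≤ 1 - bm p G) _
    · have hαempty : IsEmpty α := Fintype.card_eq_zero_iff.1 hcard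
      have hG : G = ∅ := by
        rw [Finset.eq_empty_iff_forall_notMem]
        intro B hB
        obtain ⟨e, _⟩ := hcross A hA B hB
        exact hαempty.false e
      rw [hG]
      have h0 : bm p (∅ : Finset (Finset α)) = 0 := by simp [bm]
      rw [h0, sub_zero, Real.one_rpow]
      exact bm_le_one hp.le hp1 F
  | succ n ih =>
    intro α _ _ hcard p hp hp2 F G hcross
    have hp1 : p ≤ 1 := by linarith
    have h1p : (0:ℝ) < 1 - p := by linarith
    have hne : Nonempty α := Fintype.card_pos_iff.1 (by omega)
    obtain ⟨x⟩ := hne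
    have hcardβ : Fintype.card {y : α // y ≠ x} = n := by rw [card_ne x, hcard]; omega
    have hlogp : Real.log p < 0 := Real.log_neg hp (by linarith)
    have hlog1p : Real.log (1-p) < 0 := Real.log_neg h1p (by linarith)
    set c : ℝ := Real.log p / Real.log (1-p) with hc_def
    have hc0 : 0 < c := div_pos_of_neg_of_neg hlogp hlog1p
    -- cross-intersecting conditions for restrictions
    have h00 : ∀ A' ∈ res0 x F, ∀ B' ∈ res0 x G, (A' ∩ B').Nonempty := by
      intro A' hA' B' hB'
      obtain ⟨A, hA, rfl⟩ := Finset.mem_image.1 hA'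
      obtain ⟨B, hB, rfl⟩ := Finset.mem_image.1 hB'
      rw [Finset.mem_filter] at hA hB
      exact cross_sub (hcross A hA.1 B hB.1) (Or.inl hA.2)
    have h01 : ∀ A' ∈ res0 x F, ∀ B' ∈ res1 x G, (A' ∩ B').Nonempty := by
      intro A' hA' B' hB'
      obtain ⟨A, hA, rfl⟩ := Finset.mem_image.1 hA'
      obtain ⟨B, hB, rfl⟩ := Finset.mem_image.1 hB'
      rw [Finset.mem_filter] at hA hB
      exact cross_sub (hcross A hA.1 B hB.1) (Or.inl hA.2)
    have h10 : ∀ A' ∈ res1 x F, ∀ B' ∈ res0 x G, (A' ∩ B').Nonempty := by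
      intro A' hA' B' hB'
      obtain ⟨A, hA, rfl⟩ := Finset.mem_image.1 hA'
      obtain ⟨B, hB, rfl⟩ := Finset.mem_image.1 hB'
      rw [Finset.mem_filter] at hA hB
      exact cross_sub (hcross A hA.1 B hB.1) (Or.inr hB.2)
    have i1 := ih _ hcardβ p hp hp2 _ _ h00
    have i2 := ih _ hcardβ p hp hp2 _ _ h01
    have i3 := ih _ hcardβ p hp hp2 _ _ h10
    rw [← hc_def] at i1 i2 i3
    rw [bm_split p x F, bm_split p x G]
    set x0 := bm p (res0 x F)
    set x1 := bm p (res1 x F)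
    set y0 := bm p (res0 x G)
    set y1 := bm p (res1 x G)
    have hy00 : 0 ≤ y0 := bm_nonneg hp.le hp1 _
    have hy01 : y0 ≤ 1 := bm_le_one hp.le hp1 _
    have hy10 : 0 ≤ y1 := bm_nonneg hp.le hp1 _
    have hy11 : y1 ≤ 1 := bm_le_one hp.le hp1 _
    have hx00 : 0 ≤ x0 := bm_nonneg hp.le hp1 _
    have hx10 : 0 ≤ x1 := bm_nonneg hp.le hp1 _
    have hrhs : 1 - ((1-p) * y0 + p * y1) = (1-p) * (1 - y0) + p * (1 - y1) := by ring
    rw [hrhs]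
    set u := 1 - y0 with hu_def
    set v := 1 - y1 with hv_def
    have hu0 : 0 ≤ u := by rw [hu_def]; linarith
    have hu1 : u ≤ 1 := by rw [hu_def]; linarith
    have hv0 : 0 ≤ v := by rw [hv_def]; linarith
    have hv1 : v ≤ 1 := by rw [hv_def]; linarith
    rcases le_total u v with huv | huv
    · calc (1-p) * x0 + p * x1
          ≤ (1-p) * u^c + p * u^c :=
            add_le_add (mul_le_mul_of_nonneg_left i1 h1p.le)
              (mul_le_mul_of_nonneg_left i3 hp.le)
        _ = u^c := by ring
        _ ≤ ((1-p) * u + p * v)^c := by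
            apply Real.rpow_le_rpow hu0 _ hc0.le
            nlinarith
    · have hkey := key_ineq hp hp2 hv0 huv hu1
      rw [← hc_def] at hkey
      calc (1-p) * x0 + p * x1
          ≤ (1-p) * v^c + p * u^c :=
            add_le_add (mul_le_mul_of_nonneg_left i2 h1p.le)
              (mul_le_mul_of_nonneg_left i3 hp.le)
        _ ≤ ((1-p) * u + p * v)^c := by linarith

/-- For cross-intersecting families F, G and 0 < p ≤ 1/2,
μ_p(F) ≤ (1 − μ_p(G))^{log_{1−p} p}. -/
theorem cross_intersecting_biased_bound (n : ℕ) (p : ℝ) (hp : 0 < p) (hp2 : p ≤ 1 / 2)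
    (F G : Finset (Finset (Fin n)))
    (hcross : ∀ A ∈ F, ∀ B ∈ G, (A ∩ B).Nonempty) :
    biasedMeasure p n F ≤
      (1 - biasedMeasure p n G) ^ (Real.log p / Real.log (1 - p)) := by
  have hF : biasedMeasure p n F = bm p F := by simp [biasedMeasure, bm]
  have hG : biasedMeasure p n G = bm p G := by simp [biasedMeasure, bm]
  rw [hF, hG]
  exact main_lemma n (Fin n) (Fintype.card_fin n) p hp hp2 F G hcross
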